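/- The coset space Γ_π\G, i.e. the quotient of G = (ℂ⁴, *) (with the standard topology of ℂ⁴) by the left multiplication action of the subgroup Γ_π, equipped with the quotient topology, is compact. Together with discreteness of Γ_π, this says Γ_π is a lattice (a discrete cocompact subgroup) of G. -/

import Mathlib

open Complex

lemma fract_reduce (c u : ℝ) (hc : c ≠ 0) :
    ∃ n : ℤ, ∃ t : ℝ, 0 ≤ t ∧ t ≤ 1 ∧ u + c * n = c * t := by
  refine ⟨-⌊u / c⌋, Int.fract (u / c), Int.fract_nonneg _, (Int.fract_lt_one _).le, ?_⟩
  rw [Int.fract]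
  push_cast
  field_simp
  ring

lemma vec_reduce (P : Matrix (Fin 2) (Fin 2) ℝ) (hP : IsUnit P.det) (u : Fin 2 → ℝ) :
    ∃ n : Fin 2 → ℤ, ∃ t : Fin 2 → ℝ, (∀ i, 0 ≤ t i ∧ t i ≤ 1) ∧
      ∀ i, u i + P.mulVec (fun j => (n j : ℝ)) i = P.mulVec t i := by
  set x := P⁻¹.mulVec u with hx
  refine ⟨fun j => -⌊x j⌋, fun j => Int.fract (x j),
    fun i => ⟨Int.fract_nonneg _, (Int.fract_lt_one _).le⟩, ?_⟩
  have hPx : P.mulVec x = u := by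
    rw [hx, Matrix.mulVec_mulVec, Matrix.mul_nonsing_inv P hP, Matrix.one_mulVec]
  have ht : (fun j => Int.fract (x j)) = x + (fun j => ((-⌊x j⌋ : ℤ) : ℝ)) := by
    funext j
    simp only [Pi.add_apply, Int.fract, Int.cast_neg]
    ring
  intro i
  rw [ht, Matrix.mulVec_add, hPx]
  simp

lemma mulVecC (P : Matrix (Fin 2) (Fin 2) ℝ) (m₁ m₂ : Fin 2 → ℤ) (i : Fin 2) :
    (P.map Complex.ofReal).mulVec (fun j => (m₁ j : ℂ) + (m₂ j : ℂ) * Complex.I) i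
      = ((P.mulVec (fun j => (m₁ j : ℝ)) i : ℝ) : ℂ)
        + ((P.mulVec (fun j => (m₂ j : ℝ)) i : ℝ) : ℂ) * Complex.I := by
  simp [Matrix.mulVec, dotProduct, Fin.sum_univ_two, Matrix.map_apply]
  push_cast
  ring

lemma small_int (n : ℤ) (h : |(n : ℝ)| < 1) : n = 0 := by
  have := Int.abs_lt_one_iff.mp
    (by exact_mod_cast (by rwa [← Int.cast_abs] at h : ((|n| : ℤ) : ℝ) < 1))
  exact this

lemma small_int_vec (P : Matrix (Fin 2) (Fin 2) ℝ) (hP : IsUnit P.det) (n : Fin 2 → ℤ)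
    (hb : ∀ i, |P.mulVec (fun j => (n j : ℝ)) i|
      < 1 / (|P⁻¹ 0 0| + |P⁻¹ 0 1| + |P⁻¹ 1 0| + |P⁻¹ 1 1| + 1)) : n = 0 := by
  set Q := P⁻¹ with hQ
  set M := |Q 0 0| + |Q 0 1| + |Q 1 0| + |Q 1 1| + 1 with hM
  have hM0 : 0 < M := by positivity
  set w := P.mulVec (fun j => (n j : ℝ)) with hw
  have hrec : Q.mulVec w = fun j => (n j : ℝ) := by
    rw [hw, Matrix.mulVec_mulVec, hQ, Matrix.nonsing_inv_mul P hP, Matrix.one_mulVec]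
  funext j
  have hj : (n j : ℝ) = Q j 0 * w 0 + Q j 1 * w 1 := by
    have := congrFun hrec j
    simp [Matrix.mulVec, dotProduct, Fin.sum_univ_two] at this
    linarith [this]
  have h0 := hb 0
  have h1 := hb 1
  have habs : |(n j : ℝ)| < 1 := by
    rw [hj]
    calc |Q j 0 * w 0 + Q j 1 * w 1| ≤ |Q j 0| * |w 0| + |Q j 1| * |w 1| := by
          rw [← abs_mul, ← abs_mul]; exact abs_add_le _ _
      _ < 1 := by
          have hQj : |Q j 0| + |Q j 1| + 1 ≤ M := by
            fin_cases j <;> simp [hM] <;>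
              linarith [abs_nonneg (Q 0 0), abs_nonneg (Q 0 1), abs_nonneg (Q 1 0),
                abs_nonneg (Q 1 1)]
          have hM1 : M * (1 / M) = 1 := mul_one_div_cancel hM0.ne'
          have hMpos : 0 < 1 / M := one_div_pos.mpr hM0
          have h0' := mul_le_mul_of_nonneg_left h0.le (abs_nonneg (Q j 0))
          have h1' := mul_le_mul_of_nonneg_left h1.le (abs_nonneg (Q j 1))
          have hprod := mul_le_mul_of_nonneg_right
            (by linarith : |Q j 0| + |Q j 1| ≤ M - 1) hMpos.le
          nlinarith [hprod, hM1, hMpos, h0', h1']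
  show n j = 0
  exact small_int _ habs

lemma abs_re_bound (x y : ℝ) : |x| ≤ ‖(x : ℂ) + (y : ℂ) * Complex.I‖ := by
  have h : ((x : ℂ) + (y : ℂ) * Complex.I).re = x := by simp
  calc |x| = |((x : ℂ) + (y : ℂ) * Complex.I).re| := by rw [h]
    _ ≤ _ := Complex.abs_re_le_norm _

lemma abs_im_bound (x y : ℝ) : |y| ≤ ‖(x : ℂ) + (y : ℂ) * Complex.I‖ := by
  have h : ((x : ℂ) + (y : ℂ) * Complex.I).im = y := by simp
  calc |y| = |((x : ℂ) + (y : ℂ) * Complex.I).im| := by rw [h]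
    _ ≤ _ := Complex.abs_im_le_norm _



/-- The multiplication `*` on `ℂ⁴`. -/
noncomputable def Gmul (y z : ℂ × ℂ × ℂ × ℂ) : ℂ × ℂ × ℂ × ℂ :=
  (z.1 + y.1,
   Complex.exp (-y.1) * z.2.1 + y.2.1,
   Complex.exp y.1 * z.2.2.1 + y.2.2.1,
   z.2.2.2 + y.2.2.2 + (1 / 2) * Complex.exp y.1 * y.2.1 * z.2.2.1
     - (1 / 2) * Complex.exp (-y.1) * y.2.2.1 * z.2.1)

/-- The set `Γ_μ ⊆ ℂ⁴`. -/
noncomputable def Gamma (P : Matrix (Fin 2) (Fin 2) ℝ) (lam μ : ℝ) :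
    Set (ℂ × ℂ × ℂ × ℂ) :=
  { z | ∃ (a b h k : ℤ) (m₁ m₂ : Fin 2 → ℤ),
      z = (((lam * a : ℝ) : ℂ) + ((μ * b : ℝ) : ℂ) * Complex.I,
           (P.map (Complex.ofReal)).mulVec (fun j => (m₁ j : ℂ) + (m₂ j : ℂ) * Complex.I) 0,
           (P.map (Complex.ofReal)).mulVec (fun j => (m₁ j : ℂ) + (m₂ j : ℂ) * Complex.I) 1,
           (1 / 2 : ℂ) * ((P.det : ℝ) : ℂ) * ((h : ℂ) + (k : ℂ) * Complex.I)) }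

/-- The "same left `Γ`-orbit" relation on `G = (ℂ⁴, *)`: `z ∼ w` iff `w = γ * z` for some
`γ ∈ Γ_π`.  The coset space `Γ_π\G` is the quotient of `ℂ⁴` by this relation, with the
quotient topology. -/
def leftOrbitRel (P : Matrix (Fin 2) (Fin 2) ℝ) (lam : ℝ) (z w : ℂ × ℂ × ℂ × ℂ) : Prop :=
  ∃ γ ∈ Gamma P lam Real.pi, Gmul γ z = w

/-- the coset space `Γ_π\G` (quotient of `G = (ℂ⁴,*)` by left multiplication by
`Γ_π`, with the quotient topology) is compact.  Together with discreteness of `Γ_π`, this says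
that `Γ_π` is a lattice (a discrete cocompact subgroup) of `G`. -/
theorem stmt5 (A : Matrix (Fin 2) (Fin 2) ℤ) (hA : A.det = 1)
    (lam : ℝ) (hlam : 0 < lam)
    (P : Matrix (Fin 2) (Fin 2) ℝ) (hP : IsUnit P.det)
    (hconj : P * A.map (Int.cast : ℤ → ℝ) * P⁻¹ =
      Matrix.diagonal ![Real.exp (-lam), Real.exp lam]) :
    CompactSpace (Quot (leftOrbitRel P lam)) ∧
    DiscreteTopology ↥(Gamma P lam Real.pi) := by
  have hd : P.det ≠ 0 := hP.ne_zero
  have hd2 : P.det / 2 ≠ 0 := div_ne_zero hd two_ne_zero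
  constructor
  · -- COMPACTNESS
    set r := leftOrbitRel P lam with hr
    set g : (ℝ × ℝ) × ((Fin 2 → ℝ) × (Fin 2 → ℝ)) × (ℝ × ℝ) → ℂ × ℂ × ℂ × ℂ :=
      fun w => (((lam * w.1.1 : ℝ) : ℂ) + ((Real.pi * w.1.2 : ℝ) : ℂ) * Complex.I,
        ((P 0 0 * w.2.1.1 0 + P 0 1 * w.2.1.1 1 : ℝ) : ℂ)
          + ((P 0 0 * w.2.1.2 0 + P 0 1 * w.2.1.2 1 : ℝ) : ℂ) * Complex.I,
        ((P 1 0 * w.2.1.1 0 + P 1 1 * w.2.1.1 1 : ℝ) : ℂ)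
          + ((P 1 0 * w.2.1.2 0 + P 1 1 * w.2.1.2 1 : ℝ) : ℂ) * Complex.I,
        ((P.det / 2 * w.2.2.1 : ℝ) : ℂ) + ((P.det / 2 * w.2.2.2 : ℝ) : ℂ) * Complex.I) with hg
    have hgc : Continuous g := by
      apply Continuous.prodMk
      · fun_prop
      apply Continuous.prodMk
      · fun_prop
      apply Continuous.prodMk
      · fun_prop
      · fun_prop
    set S : Set ((ℝ × ℝ) × ((Fin 2 → ℝ) × (Fin 2 → ℝ)) × (ℝ × ℝ)) :=
      (Set.Icc 0 1 ×ˢ Set.Icc 0 1) ×ˢ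
        ((Set.Icc 0 1 ×ˢ Set.Icc 0 1) ×ˢ (Set.Icc 0 1 ×ˢ Set.Icc 0 1)) with hS
    have hScomp : IsCompact S :=
      (isCompact_Icc.prod isCompact_Icc).prod
        ((isCompact_Icc.prod isCompact_Icc).prod (isCompact_Icc.prod isCompact_Icc))
    have key : ∀ z : ℂ × ℂ × ℂ × ℂ, ∃ w ∈ S, Quot.mk r z = Quot.mk r (g w) := by
      intro z
      obtain ⟨a, t0, ht00, ht01, ha⟩ := fract_reduce lam z.1.re hlam.ne'
      obtain ⟨b, t1, ht10, ht11, hb⟩ := fract_reduce Real.pi z.1.im Real.pi_ne_zero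
      set y1 : ℂ := ((lam * a : ℝ) : ℂ) + ((Real.pi * b : ℝ) : ℂ) * Complex.I with hy1
      set γ₁ : ℂ × ℂ × ℂ × ℂ := (y1, 0, 0, 0) with hγ₁
      have hmem1 : γ₁ ∈ Gamma P lam Real.pi := by
        refine ⟨a, b, 0, 0, 0, 0, ?_⟩
        simp [hγ₁, hy1, Matrix.mulVec, dotProduct, Fin.sum_univ_two]
      set z1 := Gmul γ₁ z with hz1
      have hz1c : z1 = (z.1 + y1, Complex.exp (-y1) * z.2.1,
          Complex.exp y1 * z.2.2.1, z.2.2.2) := by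
        simp [hz1, Gmul, hγ₁]
      obtain ⟨n₁, tu, htu, hu⟩ := vec_reduce P hP ![z1.2.1.re, z1.2.2.1.re]
      obtain ⟨n₂, tv, htv, hv⟩ := vec_reduce P hP ![z1.2.1.im, z1.2.2.1.im]
      set mc : Fin 2 → ℂ := fun j => (n₁ j : ℂ) + (n₂ j : ℂ) * Complex.I with hmc
      set γ₂ : ℂ × ℂ × ℂ × ℂ :=
        (0, (P.map Complex.ofReal).mulVec mc 0, (P.map Complex.ofReal).mulVec mc 1, 0) with hγ₂
      have hmem2 : γ₂ ∈ Gamma P lam Real.pi := by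
        refine ⟨0, 0, 0, 0, n₁, n₂, ?_⟩
        simp [hγ₂, hmc]
      set z2 := Gmul γ₂ z1 with hz2
      have hz2c : z2 = (z1.1, z1.2.1 + γ₂.2.1, z1.2.2.1 + γ₂.2.2.1,
          z1.2.2.2 + (1 / 2) * γ₂.2.1 * z1.2.2.1 - (1 / 2) * γ₂.2.2.1 * z1.2.1) := by
        simp [hz2, Gmul, hγ₂]
      obtain ⟨hh, t6, ht60, ht61, hhe⟩ := fract_reduce (P.det / 2) z2.2.2.2.re hd2
      obtain ⟨kk, t7, ht70, ht71, hke⟩ := fract_reduce (P.det / 2) z2.2.2.2.im hd2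
      set γ₃ : ℂ × ℂ × ℂ × ℂ :=
        (0, 0, 0, (1 / 2 : ℂ) * ((P.det : ℝ) : ℂ) * ((hh : ℂ) + (kk : ℂ) * Complex.I)) with hγ₃
      have hmem3 : γ₃ ∈ Gamma P lam Real.pi := by
        refine ⟨0, 0, hh, kk, 0, 0, ?_⟩
        simp [hγ₃, Matrix.mulVec, dotProduct, Fin.sum_univ_two]
      set z3 := Gmul γ₃ z2 with hz3
      have hz3c : z3 = (z2.1, z2.2.1, z2.2.2.1,
          z2.2.2.2 + (1 / 2 : ℂ) * ((P.det : ℝ) : ℂ) * ((hh : ℂ) + (kk : ℂ) * Complex.I)) := by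
        simp [hz3, Gmul, hγ₃]
      refine ⟨⟨⟨t0, t1⟩, ⟨tu, tv⟩, ⟨t6, t7⟩⟩, ?_, ?_⟩
      · simp only [hS, Set.mem_prod, Set.mem_Icc, Pi.le_def, Pi.zero_apply, Pi.one_apply]
        exact ⟨⟨⟨ht00, ht01⟩, ⟨ht10, ht11⟩⟩,
          ⟨⟨⟨fun i => (htu i).1, fun i => (htu i).2⟩,
            ⟨fun i => (htv i).1, fun i => (htv i).2⟩⟩,
          ⟨⟨ht60, ht61⟩, ⟨ht70, ht71⟩⟩⟩⟩
      · have e1 : Quot.mk r z = Quot.mk r z1 := Quot.sound ⟨γ₁, hmem1, rfl⟩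
        have e2 : Quot.mk r z1 = Quot.mk r z2 := Quot.sound ⟨γ₂, hmem2, rfl⟩
        have e3 : Quot.mk r z2 = Quot.mk r z3 := Quot.sound ⟨γ₃, hmem3, rfl⟩
        rw [e1, e2, e3]
        congr 1
        -- z3 = g w
        have hu0 := hu 0; have hu1 := hu 1
        have hv0 := hv 0; have hv1 := hv 1
        simp only [Matrix.mulVec, dotProduct, Fin.sum_univ_two,
          Matrix.cons_val_zero, Matrix.cons_val_one, Matrix.head_cons] at hu0 hu1 hv0 hv1
        have c1 : z3.1 = z.1 + y1 := by rw [hz3c, hz2c, hz1c]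
        have c2 : z3.2.1 = z1.2.1 + (P.map Complex.ofReal).mulVec mc 0 := by
          rw [hz3c, hz2c]
        have c3 : z3.2.2.1 = z1.2.2.1 + (P.map Complex.ofReal).mulVec mc 1 := by
          rw [hz3c, hz2c]
        have c4 : z3.2.2.2 = z2.2.2.2
            + (1 / 2 : ℂ) * ((P.det : ℝ) : ℂ) * ((hh : ℂ) + (kk : ℂ) * Complex.I) := by
          rw [hz3c]
        have hc4 : (1 / 2 : ℂ) * ((P.det : ℝ) : ℂ) * ((hh : ℂ) + (kk : ℂ) * Complex.I)
            = ((P.det / 2 * (hh : ℝ) : ℝ) : ℂ) + ((P.det / 2 * (kk : ℝ) : ℝ) : ℂ) * Complex.I := by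
          push_cast
          ring
        simp only [hg]
        refine Prod.ext ?_ (Prod.ext ?_ (Prod.ext ?_ ?_))
        · rw [c1]
          apply Complex.ext <;> simp [hy1] <;> [exact ha; exact hb]
        · rw [c2, hmc, mulVecC]
          apply Complex.ext <;>
            simp [Matrix.mulVec, dotProduct, Fin.sum_univ_two] <;>
            [linarith [hu0]; linarith [hv0]]
        · rw [c3, hmc, mulVecC]
          apply Complex.ext <;>
            simp [Matrix.mulVec, dotProduct, Fin.sum_univ_two] <;>
            [linarith [hu1]; linarith [hv1]]
        · rw [c4, hc4]
          apply Complex.ext <;> simp <;> [linarith [hhe]; linarith [hke]]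
    refine ⟨?_⟩
    have himg : Quot.mk r '' (g '' S) = Set.univ := by
      apply Set.eq_univ_of_forall
      intro q
      obtain ⟨z, rfl⟩ := Quot.exists_rep q
      obtain ⟨w, hw, hq⟩ := key z
      exact ⟨g w, ⟨w, hw, rfl⟩, hq.symm⟩
    rw [← himg]
    exact ((hScomp.image hgc).image continuous_quot_mk)
  · -- DISCRETENESS
    set Mq : ℝ := |P⁻¹ 0 0| + |P⁻¹ 0 1| + |P⁻¹ 1 0| + |P⁻¹ 1 1| + 1 with hMq
    have hMq0 : 0 < Mq := by positivity
    set ε : ℝ := min (min lam Real.pi) (min (1 / Mq) (|P.det| / 2)) with hεdef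
    have hε0 : 0 < ε :=
      lt_min (lt_min hlam Real.pi_pos)
        (lt_min (by positivity) (div_pos (abs_pos.mpr hd) two_pos))
    have hεl : ε ≤ lam := (min_le_left _ _).trans (min_le_left _ _)
    have hεp : ε ≤ Real.pi := (min_le_left _ _).trans (min_le_right _ _)
    have hεM : ε ≤ 1 / Mq := (min_le_right _ _).trans (min_le_left _ _)
    have hεd : ε ≤ |P.det| / 2 := (min_le_right _ _).trans (min_le_right _ _)
    have sep : ∀ x ∈ Gamma P lam Real.pi, ∀ y ∈ Gamma P lam Real.pi, dist x y < ε → x = y := by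
      rintro x ⟨a, b, h1, k1, m₁, m₂, rfl⟩ y ⟨a', b', h1', k1', m₁', m₂', rfl⟩ hdist
      simp only [Prod.dist_eq, max_lt_iff] at hdist
      obtain ⟨D1, D2, D3, D4⟩ := hdist
      -- coordinate 1
      have hdiff : (((lam * a : ℝ) : ℂ) + ((Real.pi * b : ℝ) : ℂ) * Complex.I)
          - (((lam * a' : ℝ) : ℂ) + ((Real.pi * b' : ℝ) : ℂ) * Complex.I)
          = ((lam * ((a : ℝ) - a') : ℝ) : ℂ)
            + ((Real.pi * ((b : ℝ) - b') : ℝ) : ℂ) * Complex.I := by push_cast; ring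
      have habs1 : ‖(((lam * ((a : ℝ) - a') : ℝ) : ℂ)
          + ((Real.pi * ((b : ℝ) - b') : ℝ) : ℂ) * Complex.I)‖ < ε := by
        rw [← hdiff, ← Complex.dist_eq]
        exact D1
      have ea : a = a' := by
        have h2 := lt_of_le_of_lt (abs_re_bound _ _) (lt_of_lt_of_le habs1 hεl)
        rw [abs_mul, abs_of_pos hlam] at h2
        have h3 : |(a : ℝ) - a'| < 1 := lt_of_mul_lt_mul_left (by rwa [mul_one]) hlam.le
        have := small_int (a - a') (by push_cast; exact h3)
        omega
      have eb : b = b' := by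
        have h2 := lt_of_le_of_lt (abs_im_bound _ _) (lt_of_lt_of_le habs1 hεp)
        rw [abs_mul, abs_of_pos Real.pi_pos] at h2
        have h3 : |(b : ℝ) - b'| < 1 :=
          lt_of_mul_lt_mul_left (by rwa [mul_one]) Real.pi_pos.le
        have := small_int (b - b') (by push_cast; exact h3)
        omega
      -- coordinates 2 and 3
      have hc23 : ∀ i : Fin 2,
          (P.map Complex.ofReal).mulVec (fun j => (m₁ j : ℂ) + (m₂ j : ℂ) * Complex.I) i
            - (P.map Complex.ofReal).mulVec (fun j => (m₁' j : ℂ) + (m₂' j : ℂ) * Complex.I) i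
          = ((P.mulVec (fun j => ((m₁ j - m₁' j : ℤ) : ℝ)) i : ℝ) : ℂ)
            + ((P.mulVec (fun j => ((m₂ j - m₂' j : ℤ) : ℝ)) i : ℝ) : ℂ) * Complex.I := by
        intro i
        rw [mulVecC P m₁ m₂ i, mulVecC P m₁' m₂' i]
        simp only [Matrix.mulVec, dotProduct, Fin.sum_univ_two]
        push_cast
        ring
      have habs23 : ∀ i : Fin 2,
          ‖(((P.mulVec (fun j => ((m₁ j - m₁' j : ℤ) : ℝ)) i : ℝ) : ℂ)
            + ((P.mulVec (fun j => ((m₂ j - m₂' j : ℤ) : ℝ)) i : ℝ) : ℂ) * Complex.I)‖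
            < 1 / Mq := by
        intro i
        rw [← hc23 i, ← Complex.dist_eq]
        fin_cases i
        · exact lt_of_lt_of_le D2 hεM
        · exact lt_of_lt_of_le D3 hεM
      have em1 : m₁ = m₁' := by
        have h0 : (fun j => m₁ j - m₁' j) = 0 := by
          apply small_int_vec P hP
          intro i
          exact lt_of_le_of_lt (abs_re_bound _ _) (habs23 i)
        funext j
        have := congrFun h0 j
        simp at this
        omega
      have em2 : m₂ = m₂' := by
        have h0 : (fun j => m₂ j - m₂' j) = 0 := by
          apply small_int_vec P hP
          intro i
          exact lt_of_le_of_lt (abs_im_bound _ _) (habs23 i)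
        funext j
        have := congrFun h0 j
        simp at this
        omega
      -- coordinate 4
      have hdiff4 : (1 / 2 : ℂ) * ((P.det : ℝ) : ℂ) * ((h1 : ℂ) + (k1 : ℂ) * Complex.I)
          - (1 / 2 : ℂ) * ((P.det : ℝ) : ℂ) * ((h1' : ℂ) + (k1' : ℂ) * Complex.I)
          = ((P.det / 2 * ((h1 : ℝ) - h1') : ℝ) : ℂ)
            + ((P.det / 2 * ((k1 : ℝ) - k1') : ℝ) : ℂ) * Complex.I := by push_cast; ring
      have habs4 : ‖(((P.det / 2 * ((h1 : ℝ) - h1') : ℝ) : ℂ)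
          + ((P.det / 2 * ((k1 : ℝ) - k1') : ℝ) : ℂ) * Complex.I)‖ < |P.det| / 2 := by
        rw [← hdiff4, ← Complex.dist_eq]
        exact lt_of_lt_of_le D4 hεd
      have hd20 : 0 < |P.det| / 2 := div_pos (abs_pos.mpr hd) two_pos
      have eh : h1 = h1' := by
        have h2 := lt_of_le_of_lt (abs_re_bound _ _) habs4
        rw [abs_mul, abs_div, _root_.abs_two] at h2
        have h3 : |(h1 : ℝ) - h1'| < 1 := lt_of_mul_lt_mul_left (by rwa [mul_one]) hd20.le
        have := small_int (h1 - h1') (by push_cast; exact h3)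
        omega
      have ek : k1 = k1' := by
        have h2 := lt_of_le_of_lt (abs_im_bound _ _) habs4
        rw [abs_mul, abs_div, _root_.abs_two] at h2
        have h3 : |(k1 : ℝ) - k1'| < 1 := lt_of_mul_lt_mul_left (by rwa [mul_one]) hd20.le
        have := small_int (k1 - k1') (by push_cast; exact h3)
        omega
      subst ea eb eh ek em1 em2
      rfl
    rw [discreteTopology_iff_isOpen_singleton]
    rintro ⟨x, hx⟩
    have hset : ({⟨x, hx⟩} : Set ↥(Gamma P lam Real.pi))
        = (Subtype.val) ⁻¹' (Metric.ball x ε) := by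
      ext ⟨y, hy⟩
      simp only [Set.mem_singleton_iff, Set.mem_preimage, Metric.mem_ball, Subtype.mk.injEq]
      constructor
      · rintro rfl
        simpa using hε0
      · intro hdy
        exact sep y hy x hx hdy
    rw [hset]
    exact Metric.isOpen_ball.preimage continuous_subtype_val
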